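/- Let A be a symmetric m×m integer matrix and u, N ∈ ℤ^m, and suppose χ_{A,u}[N](q,z) = Σ_{n ∈ ℤ^m} z^{u·n} q^{(1/2) n A nᵀ} Π_a [e_a·(N + n − nA), e_a·n]⁺_q is a well-defined (finitely supported) sum. Then for any index a, χ_{A,u}[N] = χ_{A,u}[N − e_a] + z^{u_a} q^{N_a − A_{aa}/2} χ_{A,u}[N − e_a A], where e_a A denotes the a-th row of A. -/

import Mathlib

noncomputable section

/-- The ring `ℤ[q^{1/2}, q^{-1/2}, z, z^{-1}]`: the monomial `(a,b)` stands for
`q^{a/2} z^b`. -/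
abbrev LL := AddMonoidAlgebra ℤ (ℤ × ℤ)

/-- `Qh a = q^{a/2}`. -/
def Qh (a : ℤ) : LL := AddMonoidAlgebra.single (a, 0) 1

/-- `Zv b = z^b`. -/
def Zv (b : ℤ) : LL := AddMonoidAlgebra.single (0, b) 1

def gaussRecL (v : LL) : ℕ → ℕ → LL
  | 0, 0 => 1
  | 0, _ + 1 => 0
  | _ + 1, 0 => 1
  | n + 1, m + 1 => gaussRecL v n (m + 1) * v ^ (m + 1) + gaussRecL v n m

def gaussZL (v : LL) (n m : ℤ) : LL :=
  if 0 ≤ m ∧ m ≤ n then gaussRecL v n.toNat m.toNat else 0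

/-- The Gaussian binomial `[n m]_q`, with `q = Qh 2`. -/
def qbinL (n m : ℤ) : LL := gaussZL (Qh 2) n m

/-- The extended q-binomial `[n m]⁺_q`. -/
def qbinPlusL (n m : ℤ) : LL :=
  if 0 ≤ n then qbinL n m
  else (-1) ^ (n - m).natAbs * Qh (-((n - m) ^ 2 + (n - m))) *
    gaussZL (Qh (-2)) (-m - 1) (-n - 1)


/-- A single summand of `χ_{A,u}[N](q,z)`. -/
def chiTerm {m : ℕ} (A : Matrix (Fin m) (Fin m) ℤ) (u N : Fin m → ℤ)
    (n : Fin m → ℤ) : LL :=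
  Zv (∑ i, u i * n i) * Qh (∑ i, ∑ j, n i * A i j * n j) *
    ∏ a, qbinPlusL (N a + n a - ∑ j, n j * A j a) (n a)

/-- `χ_{A,u}[N](q,z) = Σ_{n ∈ ℤ^m} z^{u·n} q^{(1/2) n A nᵀ} Π_a [e_a·(N+n-nA), e_a·n]⁺`. -/
def chi {m : ℕ} (A : Matrix (Fin m) (Fin m) ℤ) (u N : Fin m → ℤ) : LL :=
  ∑ᶠ n : Fin m → ℤ, chiTerm A u N n


/-! ### Auxiliary lemmas -/

lemma gaussRecL_zero_right (v : LL) : ∀ n, gaussRecL v n 0 = 1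
  | 0 => rfl
  | _ + 1 => rfl

lemma gaussRecL_eq_zero (v : LL) : ∀ n m, n < m → gaussRecL v n m = 0
  | 0, 0, h => absurd h (by omega)
  | 0, _ + 1, _ => rfl
  | n + 1, 0, h => absurd h (by omega)
  | n + 1, m + 1, h => by
    show gaussRecL v n (m + 1) * v ^ (m + 1) + gaussRecL v n m = 0
    rw [gaussRecL_eq_zero v n (m+1) (by omega), gaussRecL_eq_zero v n m (by omega)]
    ring

lemma gaussRecL_diag (v : LL) : ∀ n, gaussRecL v n n = 1
  | 0 => rfl
  | n + 1 => by
    show gaussRecL v n (n + 1) * v ^ (n + 1) + gaussRecL v n n = 1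
    rw [gaussRecL_eq_zero v n (n+1) (by omega), gaussRecL_diag v n]
    ring

lemma gaussRecL_one (v : LL) : ∀ n, gaussRecL v n 1 * v + 1 = gaussRecL v n 1 + v ^ n
  | 0 => by rw [gaussRecL_eq_zero v 0 1 (by omega)]; ring
  | n + 1 => by
    have h : gaussRecL v (n+1) 1 = gaussRecL v n 1 * v ^ 1 + gaussRecL v n 0 := rfl
    rw [gaussRecL_zero_right] at h
    have ih := gaussRecL_one v n
    rw [h]
    calc (gaussRecL v n 1 * v ^ 1 + 1) * v + 1
        = (gaussRecL v n 1 * v + 1) * v + 1 - v + v := by ring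
      _ = (gaussRecL v n 1 + v ^ n) * v + 1 - v + v := by rw [ih]
      _ = (gaussRecL v n 1 * v ^ 1 + 1) + v ^ (n + 1) := by ring

/-- reversed Pascal for `gaussRecL` -/
lemma gaussRecL_pascal (v : LL) : ∀ n m : ℕ, m ≤ n →
    gaussRecL v (n + 1) (m + 1) = gaussRecL v n (m + 1) + v ^ (n - m) * gaussRecL v n m
  | n, 0, _ => by
    have h : gaussRecL v (n+1) 1 = gaussRecL v n 1 * v ^ 1 + gaussRecL v n 0 := by
      cases n <;> rfl
    rw [gaussRecL_zero_right] at h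
    simp only [Nat.sub_zero, Nat.zero_add, gaussRecL_zero_right, mul_one, pow_one] at h ⊢
    rw [h]
    linear_combination gaussRecL_one v n
  | 0, m + 1, h => absurd h (by omega)
  | n + 1, m + 1, h => by
    rcases Nat.lt_or_ge (m + 1) (n + 1) with hlt | hge
    · have hm : m + 1 ≤ n := by omega
      have hm' : m ≤ n := by omega
      obtain ⟨k, hk⟩ : ∃ k, n - m = k + 1 := ⟨n - m - 1, by omega⟩
      have d1 : gaussRecL v (n + 2) (m + 2) =
          gaussRecL v (n+1) (m + 2) * v ^ (m + 2) + gaussRecL v (n+1) (m+1) := rfl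
      have d2 : gaussRecL v (n+1) (m+1) =
          gaussRecL v n (m+1) * v ^ (m+1) + gaussRecL v n m := rfl
      have dP : gaussRecL v (n+1) (m+2) =
          gaussRecL v n (m+2) * v ^ (m+2) + gaussRecL v n (m+1) := rfl
      have i1 := gaussRecL_pascal v n (m+1) hm
      have i2 := gaussRecL_pascal v n m hm'
      rw [show n - (m+1) = k by omega] at i1
      rw [hk] at i2
      rw [show (n+1) - (m+1) = k + 1 by omega]
      linear_combination d1 + v^(m+2) * i1 + i2 - dP - v^(k+1) * d2
    · have hm : m = n := by omega
      subst hm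
      rw [gaussRecL_diag, gaussRecL_diag, gaussRecL_eq_zero v (m+1) (m+2) (by omega)]
      simp

lemma gaussZL_pascal (v : LL) (c : ℤ → LL) (hc : ∀ k : ℕ, c k = v ^ k)
    (n m : ℤ) (hn : 1 ≤ n) :
    gaussZL v n m = gaussZL v (n-1) m + c (n - m) * gaussZL v (n-1) (m-1) := by
  rcases lt_trichotomy m 0 with hm | hm | hm
  · rw [gaussZL, gaussZL, gaussZL, if_neg (by omega), if_neg (by omega), if_neg (by omega)]
    ring
  · subst hm
    rw [gaussZL, gaussZL, gaussZL, if_pos (by omega), if_pos (by omega), if_neg (by omega)]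
    simp [gaussRecL_zero_right]
  · rcases lt_trichotomy m n with hmn | hmn | hmn
    · rw [gaussZL, gaussZL, gaussZL, if_pos (by omega), if_pos (by omega), if_pos (by omega)]
      obtain ⟨n', hn'⟩ : ∃ n' : ℕ, n = (n' : ℤ) + 1 := ⟨(n-1).toNat, by omega⟩
      obtain ⟨m', hm'⟩ : ∃ m' : ℕ, m = (m' : ℤ) + 1 := ⟨(m-1).toNat, by omega⟩
      have hmn' : m' ≤ n' := by omega
      have e1 : n.toNat = n' + 1 := by omega
      have e2 : m.toNat = m' + 1 := by omega
      have e3 : (n-1).toNat = n' := by omega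
      have e4 : (m-1).toNat = m' := by omega
      have e5 : n - m = ((n' - m' : ℕ) : ℤ) := by omega
      rw [e1, e2, e3, e4, e5, hc]
      exact gaussRecL_pascal v n' m' hmn'
    · subst hmn
      rw [gaussZL, gaussZL, gaussZL, if_pos (by omega), if_neg (by omega), if_pos (by omega)]
      have e0 : m - m = ((0 : ℕ) : ℤ) := by omega
      rw [e0, hc, gaussRecL_diag, gaussRecL_diag]
      simp
    · rw [gaussZL, gaussZL, gaussZL, if_neg (by omega), if_neg (by omega), if_neg (by omega)]
      ring

lemma Qh_mul (a b : ℤ) : Qh a * Qh b = Qh (a + b) := by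
  simp [Qh, AddMonoidAlgebra.single_mul_single, Prod.mk_add_mk]

lemma Qh_zero : Qh 0 = 1 := by
  rw [Qh, AddMonoidAlgebra.one_def]; rfl

lemma Qh_pow (a : ℤ) (k : ℕ) : Qh a ^ k = Qh (k * a) := by
  induction k with
  | zero => simp [Qh_zero]
  | succ k ih => rw [pow_succ, ih, Qh_mul]; congr 1; push_cast; ring

lemma Zv_mul (a b : ℤ) : Zv a * Zv b = Zv (a + b) := by
  simp [Zv, AddMonoidAlgebra.single_mul_single, Prod.mk_add_mk]

lemma neg_one_pow_sub_one (x : ℤ) :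
    ((-1 : LL)) ^ (x - 1).natAbs = -((-1) ^ x.natAbs) := by
  rcases Int.even_or_odd x with h | h
  · have h1 : Odd (x - 1) := by rcases h with ⟨k, hk⟩; exact ⟨k - 1, by omega⟩
    rw [(Int.natAbs_even.mpr h).neg_one_pow, (Int.natAbs_odd.mpr h1).neg_one_pow]
    try norm_num
  · have h1 : Even (x - 1) := by rcases h with ⟨k, hk⟩; exact ⟨k, by omega⟩
    rw [(Int.natAbs_odd.mpr h).neg_one_pow, (Int.natAbs_even.mpr h1).neg_one_pow]
    try norm_num

lemma qbinPlusL_pascal (n m : ℤ) :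
    qbinPlusL n m = qbinPlusL (n-1) m + Qh (2*(n-m)) * qbinPlusL (n-1) (m-1) := by
  rcases lt_trichotomy n 0 with hn | hn | hn
  · -- n ≤ -1
    rw [qbinPlusL, qbinPlusL, qbinPlusL, if_neg (by omega), if_neg (by omega),
      if_neg (by omega)]
    rcases le_or_gt 0 m with hm | hm
    · rw [gaussZL, gaussZL, gaussZL, if_neg (by omega), if_neg (by omega), if_neg (by omega)]
      ring
    · have hp := gaussZL_pascal (Qh (-2)) (fun t => Qh (-2*t))
        (fun k => by rw [Qh_pow]; congr 1; push_cast; ring) (-m) (-n) (by omega)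
      simp only [show -m - -n = n - m by ring] at hp
      rw [show n - 1 - m = (n - m) - 1 by ring, show n - 1 - (m - 1) = n - m by ring,
        show -(n-1) - 1 = -n by ring, show -(m-1) - 1 = -m by ring,
        neg_one_pow_sub_one]
      have hq1 : Qh (-(((n-m) - 1)^2 + ((n-m) - 1))) = Qh (2*(n-m)) * Qh (-((n-m)^2 + (n-m))) := by
        rw [Qh_mul]; congr 1; ring
      have hq2 : Qh (2*(n-m)) * Qh (-2*(n-m)) = 1 := by
        rw [Qh_mul, show 2*(n-m) + -2*(n-m) = 0 by ring, Qh_zero]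
      rw [hq1, hp]
      set S := ((-1 : LL)) ^ (n - m).natAbs
      set Q2 := Qh (-((n-m)^2 + (n-m)))
      set Q1 := Qh (2*(n-m))
      set Q3 := Qh (-2*(n-m))
      set G0 := gaussZL (Qh (-2)) (-m - 1) (-n - 1)
      set G1 := gaussZL (Qh (-2)) (-m - 1) (-n)
      linear_combination (-(S * Q2 * G0)) * hq2
  · -- n = 0
    subst hn
    rw [qbinPlusL, qbinPlusL, qbinPlusL, if_pos le_rfl, if_neg (by omega), if_neg (by omega)]
    rcases lt_trichotomy m 0 with hm | hm | hm
    · rw [qbinL, gaussZL, if_neg (by omega)]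
      rw [show (0:ℤ) - 1 - m = -m - 1 by ring, show (0:ℤ) - 1 - (m-1) = -m by ring,
        show -((0:ℤ)-1) - 1 = 0 by ring, show -(m-1) - 1 = -m by ring,
        neg_one_pow_sub_one]
      rw [gaussZL, if_pos (by omega), gaussZL, if_pos (by omega)]
      simp only [Int.toNat_zero, gaussRecL_zero_right]
      have hq : Qh (2*(0-m)) * Qh (-((-m)^2 + (-m))) = Qh (-((-m-1)^2 + (-m-1))) := by
        rw [Qh_mul]; congr 1; ring
      set S := ((-1 : LL)) ^ (-m).natAbs
      linear_combination (-S) * hq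
    · subst hm
      norm_num [qbinL, gaussZL, gaussRecL, Qh_zero]
    · rw [qbinL, gaussZL, if_neg (by omega), gaussZL, if_neg (by omega),
        gaussZL, if_neg (by omega)]
      ring
  · -- n ≥ 1
    rw [qbinPlusL, qbinPlusL, qbinPlusL, if_pos (by omega), if_pos (by omega),
      if_pos (by omega)]
    rw [qbinL, qbinL, qbinL]
    exact gaussZL_pascal (Qh 2) (fun t => Qh (2*t))
      (fun k => by rw [Qh_pow]; congr 1; push_cast; ring) n m (by omega)

lemma chiTerm_pascal {m : ℕ} (A : Matrix (Fin m) (Fin m) ℤ) (hA : A.IsSymm)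
    (u N : Fin m → ℤ) (a : Fin m) (n : Fin m → ℤ) :
    chiTerm A u N n =
      chiTerm A u (fun i => N i - if i = a then 1 else 0) n +
      Zv (u a) * Qh (2 * N a - A a a) *
        chiTerm A u (fun i => N i - A a i) (fun i => n i - if i = a then 1 else 0) := by
  classical
  have hAs : ∀ i j, A i j = A j i := fun i j => Matrix.IsSymm.apply hA j i
  have col : ∀ (c : Fin m → ℤ), (∑ i, if i = a then c i else 0) = c a := fun c => by simp
  have hS' : (∑ i, u i * (n i - if i = a then 1 else 0)) = (∑ i, u i * n i) - u a := by
    simp [mul_sub, Finset.sum_sub_distrib, mul_ite]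
  have hT' : ∀ b, (∑ j, (n j - if j = a then 1 else 0) * A j b) = (∑ j, n j * A j b) - A a b := by
    intro b
    simp [sub_mul, Finset.sum_sub_distrib, ite_mul]
  have hQ' : (∑ i, ∑ j, (n i - if i = a then 1 else 0) * A i j * (n j - if j = a then 1 else 0))
      = (∑ i, ∑ j, n i * A i j * n j) - 2 * (∑ j, n j * A j a) + A a a := by
    have expand : ∀ i j, (n i - (if i = a then (1:ℤ) else 0)) * A i j * (n j - if j = a then 1 else 0)
        = n i * A i j * n j - (if i = a then (1:ℤ) else 0) * (A i j * n j)
          - (n i * A i j) * (if j = a then (1:ℤ) else 0)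
          + (if i = a then (1:ℤ) else 0) * A i j * (if j = a then (1:ℤ) else 0) := by
      intros; ring
    simp only [expand, Finset.sum_add_distrib, Finset.sum_sub_distrib]
    have s1 : (∑ i, ∑ j, (if i = a then (1:ℤ) else 0) * (A i j * n j)) = ∑ j, A a j * n j := by
      rw [Finset.sum_congr rfl (fun i _ => show (∑ j, (if i = a then (1:ℤ) else 0) * (A i j * n j))
        = if i = a then ∑ j, A i j * n j else 0 from by split <;> simp), col]
    have s2 : (∑ i, ∑ j, (n i * A i j) * (if j = a then (1:ℤ) else 0)) = ∑ i, n i * A i a := by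
      apply Finset.sum_congr rfl
      intro i _
      simp [mul_ite]
    have s3 : (∑ i, ∑ j, (if i = a then (1:ℤ) else 0) * A i j * (if j = a then (1:ℤ) else 0))
        = A a a := by
      rw [Finset.sum_congr rfl (fun i _ => show (∑ j, (if i = a then (1:ℤ) else 0) * A i j * (if j = a then (1:ℤ) else 0))
        = if i = a then A i a else 0 from by split <;> simp [ite_mul, mul_ite]), col]
    rw [s1, s2, s3]
    have s4 : (∑ j, A a j * n j) = ∑ j, n j * A j a := by
      apply Finset.sum_congr rfl; intro j _; rw [hAs a j]; ring
    have s5 : (∑ i, n i * A i a) = ∑ j, n j * A j a := rfl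
    rw [s4, s5]; ring
  simp only [chiTerm]
  rw [hS', hQ']
  have hp0 : (∏ b, qbinPlusL (N b + n b - ∑ j, n j * A j b) (n b))
      = qbinPlusL (N a + n a - ∑ j, n j * A j a) (n a) *
        ∏ b ∈ Finset.univ.erase a, qbinPlusL (N b + n b - ∑ j, n j * A j b) (n b) :=
    (Finset.mul_prod_erase _ _ (Finset.mem_univ a)).symm
  have hp1 : (∏ b, qbinPlusL ((N b - if b = a then 1 else 0) + n b - ∑ j, n j * A j b) (n b))
      = qbinPlusL ((N a + n a - ∑ j, n j * A j a) - 1) (n a) *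
        ∏ b ∈ Finset.univ.erase a, qbinPlusL (N b + n b - ∑ j, n j * A j b) (n b) := by
    rw [← Finset.mul_prod_erase Finset.univ _ (Finset.mem_univ a)]
    congr 1
    · rw [if_pos rfl]
      congr 1
      ring
    · exact Finset.prod_congr rfl fun b hb => by
        rw [if_neg (Finset.mem_erase.mp hb).1, sub_zero]
  have hp2 : (∏ b, qbinPlusL ((N b - A a b) + (n b - if b = a then 1 else 0)
        - ∑ j, (n j - if j = a then 1 else 0) * A j b) (n b - if b = a then 1 else 0))
      = qbinPlusL ((N a + n a - ∑ j, n j * A j a) - 1) (n a - 1) *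
        ∏ b ∈ Finset.univ.erase a, qbinPlusL (N b + n b - ∑ j, n j * A j b) (n b) := by
    rw [← Finset.mul_prod_erase Finset.univ _ (Finset.mem_univ a)]
    congr 1
    · rw [hT' a, if_pos rfl]
      congr 1
      ring
    · refine Finset.prod_congr rfl fun b hb => ?_
      rw [hT' b, if_neg (Finset.mem_erase.mp hb).1, sub_zero]
      congr 1
      ring
  rw [hp0, hp1, hp2, qbinPlusL_pascal (N a + n a - ∑ j, n j * A j a) (n a)]
  have hz : Zv (u a) * Zv ((∑ i, u i * n i) - u a) = Zv (∑ i, u i * n i) := by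
    rw [Zv_mul]; congr 1; ring
  have hq : Qh (2 * N a - A a a) *
        Qh ((∑ i, ∑ j, n i * A i j * n j) - 2 * (∑ j, n j * A j a) + A a a)
      = Qh (∑ i, ∑ j, n i * A i j * n j) *
        Qh (2 * (N a + n a - (∑ j, n j * A j a) - n a)) := by
    rw [Qh_mul, Qh_mul]; congr 1; ring
  have hzq : (Zv (u a) * Zv ((∑ i, u i * n i) - u a)) *
        (Qh (2 * N a - A a a) *
          Qh ((∑ i, ∑ j, n i * A i j * n j) - 2 * (∑ j, n j * A j a) + A a a))
      = Zv (∑ i, u i * n i) *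
        (Qh (∑ i, ∑ j, n i * A i j * n j) *
          Qh (2 * (N a + n a - (∑ j, n j * A j a) - n a))) := by
    rw [hz, hq]
  set X2 := qbinPlusL ((N a + n a - ∑ j, n j * A j a) - 1) (n a - 1)
  set P := ∏ b ∈ Finset.univ.erase a, qbinPlusL (N b + n b - ∑ j, n j * A j b) (n b)
  linear_combination (-(X2 * P)) * hzq

/-- the recurrence
`χ_{A,u}[N] = χ_{A,u}[N - e_a] + z^{u_a} q^{N_a - A_{aa}/2} χ_{A,u}[N - e_a A]`. -/
theorem chi_recurrence (m : ℕ) (A : Matrix (Fin m) (Fin m) ℤ) (hA : A.IsSymm)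
    (u N : Fin m → ℤ) (a : Fin m)
    (h1 : (Function.support (chiTerm A u N)).Finite)
    (h2 : (Function.support (chiTerm A u (fun i => N i - if i = a then 1 else 0))).Finite)
    (h3 : (Function.support (chiTerm A u (fun i => N i - A a i))).Finite) :
    chi A u N =
      chi A u (fun i => N i - if i = a then 1 else 0) +
        Zv (u a) * Qh (2 * N a - A a a) * chi A u (fun i => N i - A a i) := by
  classical
  set d : Fin m → ℤ := fun i => if i = a then 1 else 0 with hd
  set g := chiTerm A u (fun i => N i - A a i) with hg
  have key : ∀ n, chiTerm A u N n =
      chiTerm A u (fun i => N i - if i = a then 1 else 0) n +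
        Zv (u a) * Qh (2 * N a - A a a) * g ((Equiv.subRight d) n) :=
    fun n => chiTerm_pascal A hA u N a n
  have hfin0 : (Function.support (fun n => g ((Equiv.subRight d) n))).Finite := by
    apply Set.Finite.subset (h3.preimage ((Equiv.subRight d).injective.injOn))
    exact fun x hx => hx
  have hfin : (Function.support
      (fun n => Zv (u a) * Qh (2 * N a - A a a) * g ((Equiv.subRight d) n))).Finite := by
    apply hfin0.subset
    intro x hx h0
    exact hx (by simp only [Function.mem_support] at *; rw [h0]; ring)
  rw [chi, chi, chi, finsum_congr key, finsum_add_distrib h2 hfin]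
  congr 1
  rw [← mul_finsum _ _, finsum_comp_equiv (Equiv.subRight d)]

end
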